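/- Let ω, g ∈ ℝ and let r ∈ ℂ with |Re r| < 1. The function q(ζ) = e^{rζ} (ζ ∈ ℝ) satisfies the non-local oscillator equation q''(ζ) + ω² q(ζ) − (g/2) ∫_ℝ e^{−|τ|} q(ζ−τ) dτ = 0 for all ζ ∈ ℝ if and only if r⁴ + (ω² − 1) r² + (g − ω²) = 0. -/

import Mathlib

open MeasureTheory Set Filter Complex

lemma cexp_integrable' {c : ℂ} (hc : 0 < c.re) :
    IntegrableOn (fun x : ℝ => Complex.exp (-(c * x))) (Ioi (0:ℝ)) := by
  apply Integrable.mono' ((exp_neg_integrableOn_Ioi 0 hc))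
  · exact (Complex.continuous_exp.comp (by continuity)).aestronglyMeasurable
  · filter_upwards with x
    rw [Complex.norm_exp]
    simp [mul_comm]

lemma cexp_integral' {c : ℂ} (hc : 0 < c.re) :
    ∫ x : ℝ in Ioi (0:ℝ), Complex.exp (-(c * x)) = 1 / c := by
  have hc0 : c ≠ 0 := fun h => by simp [h] at hc
  have hderiv : ∀ x ∈ Ici (0:ℝ), HasDerivAt (fun x : ℝ => -Complex.exp (-(c * x)) / c)
      (Complex.exp (-(c * x))) x := by
    intro x _
    have h1 : HasDerivAt (fun t : ℝ => -(c * (t:ℂ))) (-c) x := by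
      have h0 := ((Complex.ofRealCLM.hasDerivAt (x := x)).const_mul c).neg
      simp only [Complex.ofRealCLM_apply, Complex.ofReal_one, mul_one] at h0
      exact h0
    have := (h1.cexp).neg.div_const c
    have hv : -(Complex.exp (-(c * x)) * -c) / c = Complex.exp (-(c * x)) := by field_simp
    rw [hv] at this
    exact this
  have htend : Tendsto (fun x : ℝ => -Complex.exp (-(c * x)) / c) atTop (nhds 0) := by
    have : Tendsto (fun x : ℝ => Complex.exp (-(c * x))) atTop (nhds 0) := by
      rw [tendsto_zero_iff_norm_tendsto_zero]
      have : ∀ x : ℝ, ‖Complex.exp (-(c * x))‖ = Real.exp (-(c.re * x)) := by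
        intro x; rw [Complex.norm_exp]; simp [mul_comm]
      simp_rw [this]
      exact Real.tendsto_exp_atBot.comp (tendsto_neg_atBot_iff.mpr
        ((tendsto_const_mul_atTop_of_pos hc).mpr tendsto_id))
    simpa using (this.neg.div_const c)
  have := integral_Ioi_of_hasDerivAt_of_tendsto' hderiv (cexp_integrable' hc) htend
  rw [this]; simp; ring

lemma kernel_integral {r : ℂ} (hr : |r.re| < 1) :
    ∫ τ : ℝ, (Real.exp (-|τ|) : ℂ) * Complex.exp (-(r * τ))
      = 1 / (1 + r) + 1 / (1 - r) := by
  obtain ⟨hr1, hr2⟩ := abs_lt.mp hr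
  have h1 : 0 < (1 + r).re := by simp; linarith
  have h2 : 0 < (1 - r).re := by simp [Complex.sub_re]; linarith
  set f : ℝ → ℂ := fun τ => (Real.exp (-|τ|) : ℂ) * Complex.exp (-(r * τ)) with hf
  have e1 : ∀ τ ∈ Ioi (0:ℝ), f τ = Complex.exp (-((1 + r) * τ)) := by
    intro τ hτ
    rw [hf]
    simp only
    rw [abs_of_pos hτ, Complex.ofReal_exp, ← Complex.exp_add]
    congr 1
    push_cast
    ring
  have e2 : ∀ τ ∈ Ioi (0:ℝ), f (-τ) = Complex.exp (-((1 - r) * τ)) := by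
    intro τ hτ
    rw [hf]
    simp only
    rw [abs_neg, abs_of_pos hτ, Complex.ofReal_exp, ← Complex.exp_add]
    congr 1
    push_cast
    ring
  have IntR : IntegrableOn f (Ioi (0:ℝ)) :=
    (cexp_integrable' h1).congr_fun (fun τ hτ => (e1 τ hτ).symm) measurableSet_Ioi
  have IntL : IntegrableOn f (Iic (0:ℝ)) := by
    rw [← (Measure.measurePreserving_neg (volume : Measure ℝ)).integrableOn_comp_preimage
        (Homeomorph.neg ℝ).measurableEmbedding]
    simp only [Function.comp_def, neg_preimage, neg_Iic, neg_zero]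
    rw [integrableOn_Ici_iff_integrableOn_Ioi]
    exact (cexp_integrable' h2).congr_fun (fun τ hτ => (e2 τ hτ).symm) measurableSet_Ioi
  have := intervalIntegral.integral_Iic_add_Ioi IntL IntR
  rw [← this]
  have hL : ∫ τ in Iic (0:ℝ), f τ = 1 / (1 - r) := by
    rw [show Iic (0:ℝ) = Iic (-0) by norm_num, ← integral_comp_neg_Ioi,
      setIntegral_congr_fun measurableSet_Ioi e2]
    exact cexp_integral' h2
  have hR : ∫ τ in Ioi (0:ℝ), f τ = 1 / (1 + r) := by
    rw [setIntegral_congr_fun measurableSet_Ioi e1]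
    exact cexp_integral' h1
  rw [hL, hR]; ring

/-- The exponential trajectory q(ζ) = e^{rζ} with |Re r| < 1 solves the non-local
oscillator equation q̈ + ω²q − (g/2)(K∗q) = 0, K(ζ) = e^{−|ζ|}, iff r is a root of the
characteristic quartic r⁴ + (ω²−1)r² + (g−ω²). -/
theorem stmt5 (ω g : ℝ) (r : ℂ) (hr : |r.re| < 1) :
    (∀ ζ : ℝ,
        deriv (deriv (fun s : ℝ => Complex.exp (r * s))) ζ
          + (ω : ℂ) ^ 2 * Complex.exp (r * ζ)
          - ((g : ℂ) / 2) *
              ∫ τ : ℝ, (Real.exp (-|τ|) : ℂ) * Complex.exp (r * ((ζ : ℂ) - τ)) = 0)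
      ↔ r ^ 4 + ((ω : ℂ) ^ 2 - 1) * r ^ 2 + ((g : ℂ) - (ω : ℂ) ^ 2) = 0 := by
  obtain ⟨hr1, hr2⟩ := abs_lt.mp hr
  have h1r : (1 + r) ≠ 0 := by
    intro h
    have : (1 + r).re = 0 := by rw [h]; simp
    simp at this; linarith
  have h2r : (1 - r) ≠ 0 := by
    intro h
    have : (1 - r).re = 0 := by rw [h]; simp
    simp [Complex.sub_re] at this; linarith
  -- derivatives
  have hd : ∀ s : ℝ, HasDerivAt (fun t : ℝ => Complex.exp (r * t))
      (Complex.exp (r * s) * r) s := by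
    intro s
    exact (by simpa using ((Complex.ofRealCLM.hasDerivAt (x := s)).const_mul r) :
      HasDerivAt (fun t : ℝ => r * (t:ℂ)) r s).cexp
  have d1 : deriv (fun s : ℝ => Complex.exp (r * s))
      = fun s : ℝ => Complex.exp (r * s) * r := funext fun s => (hd s).deriv
  have d2 : ∀ ζ : ℝ, deriv (deriv (fun s : ℝ => Complex.exp (r * s))) ζ
      = Complex.exp (r * ζ) * r * r := by
    intro ζ
    rw [d1]
    exact ((hd ζ).mul_const r).deriv
  -- the integral
  have hint : ∀ ζ : ℝ, (∫ τ : ℝ, (Real.exp (-|τ|) : ℂ) * Complex.exp (r * ((ζ : ℂ) - τ)))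
      = Complex.exp (r * ζ) * (1 / (1 + r) + 1 / (1 - r)) := by
    intro ζ
    have : ∀ τ : ℝ, (Real.exp (-|τ|) : ℂ) * Complex.exp (r * ((ζ : ℂ) - τ))
        = Complex.exp (r * ζ) * ((Real.exp (-|τ|) : ℂ) * Complex.exp (-(r * τ))) := by
      intro τ
      rw [show r * ((ζ : ℂ) - τ) = r * ζ + -(r * τ) by ring, Complex.exp_add]
      ring
    simp_rw [this]
    rw [integral_const_mul, kernel_integral hr]
  constructor
  · intro h
    have h0 := h 0
    rw [d2, hint] at h0
    have hE : Complex.exp (r * (0:ℝ)) ≠ 0 := Complex.exp_ne_zero _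
    set E := Complex.exp (r * (0:ℝ)) with hEdef
    have key : E * r * r + (ω : ℂ) ^ 2 * E - ((g : ℂ) / 2) * (E * (1 / (1 + r) + 1 / (1 - r)))
        = E * (-(r ^ 4 + ((ω : ℂ) ^ 2 - 1) * r ^ 2 + ((g : ℂ) - (ω : ℂ) ^ 2)))
          / ((1 + r) * (1 - r)) := by
      field_simp
      ring
    rw [key] at h0
    rcases div_eq_zero_iff.mp h0 with h' | h'
    · rcases mul_eq_zero.mp h' with h'' | h''
      · exact absurd h'' hE
      · exact neg_eq_zero.mp h''
    · exact absurd h' (mul_ne_zero h1r h2r)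
  · intro hP ζ
    rw [d2, hint]
    set E := Complex.exp (r * ζ) with hEdef
    have key : E * r * r + (ω : ℂ) ^ 2 * E - ((g : ℂ) / 2) * (E * (1 / (1 + r) + 1 / (1 - r)))
        = E * (-(r ^ 4 + ((ω : ℂ) ^ 2 - 1) * r ^ 2 + ((g : ℂ) - (ω : ℂ) ^ 2)))
          / ((1 + r) * (1 - r)) := by
      field_simp
      ring
    rw [key, hP]
    simp
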